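/- Any separated sequence {z_n} in 𝔻 can be divided into finitely many subsequences 𝒵_1, ..., 𝒵_M such that for each j: the top part of any Carleson square contains at most one point of 𝒵_j, and there exists m ∈ {0,1,...,6} with 𝒵_j contained in the union over k ≥ 0 of the annuli {z : 2^{-m-7k} < 1-|z| ≤ 2^{-m-(7k-1)}}. -/

import Mathlib

/-- Pseudo-hyperbolic distance on the unit disc. -/
noncomputable def pd (z w : ℂ) : ℝ :=
  ‖z - w‖ / ‖1 - (starRingEnd ℂ) z * w‖

/-- Separation in the pseudo-hyperbolic metric. -/
def Separated (z : ℕ → ℂ) : Prop :=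
  ∃ δ : ℝ, 0 < δ ∧ δ < 1 ∧ ∀ n k : ℕ, n ≠ k → δ < pd (z n) (z k)

/-- The top part of the Carleson square over the arc `{e^{iθ} : a ≤ θ ≤ a + 2πℓ}` of
normalized length `ℓ`: radii `1 - ℓ ≤ r < 1 - ℓ/2`. -/
def topPart (a ℓ : ℝ) : Set ℂ :=
  {z | ∃ r θ : ℝ, 1 - ℓ ≤ r ∧ r < 1 - ℓ / 2 ∧ a ≤ θ ∧ θ ≤ a + 2 * Real.pi * ℓ ∧
    z = (r : ℂ) * Complex.exp (θ * Complex.I)}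

/- ----------------------------------------------------------------
   Auxiliary material
---------------------------------------------------------------- -/

lemma bound7 {x p : ℝ} (hx : 0 ≤ x) (hp : p ≤ 3.15) (hp0 : 0 < p) :
    x/2 + 2*p*x ≤ 7*x := by nlinarith

lemma exp_I_dist (x y : ℝ) :
    ‖Complex.exp (x*Complex.I) - Complex.exp (y*Complex.I)‖ ≤ |x - y| := by
  have key : ∀ s : ℝ, ‖Complex.exp (s*Complex.I) - 1‖ ≤ |s| := by
    intro s
    have h1 : (Complex.exp (s*Complex.I) - 1).re = Real.cos s - 1 := by
      simp [Complex.exp_ofReal_mul_I_re]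
    have h2 : (Complex.exp (s*Complex.I) - 1).im = Real.sin s := by
      simp [Complex.exp_ofReal_mul_I_im]
    have hsq : (‖Complex.exp (s*Complex.I) - 1‖)^2
        = (Real.cos s - 1)^2 + (Real.sin s)^2 := by
      rw [Complex.sq_norm, Complex.normSq_apply, h1, h2]; ring
    have hcos := Real.one_sub_sq_div_two_le_cos (x := s)
    have hsin := Real.sin_sq_add_cos_sq s
    nlinarith [norm_nonneg (Complex.exp (s*Complex.I) - 1), abs_nonneg s, sq_abs s]
  have hsplit : Complex.exp (x*Complex.I) - Complex.exp (y*Complex.I)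
      = Complex.exp (y*Complex.I) * (Complex.exp (((x-y):ℝ)*Complex.I) - 1) := by
    rw [mul_sub, ← Complex.exp_add, mul_one]
    push_cast
    ring_nf
  rw [hsplit, norm_mul, Complex.norm_exp_ofReal_mul_I, one_mul]
  exact key (x - y)

lemma grid_close {s x y : ℝ} (hs : 0 < s) (h : ⌊x/s⌋ = ⌊y/s⌋) : |x - y| < s := by
  have h1 : (⌊y/s⌋:ℝ) * s ≤ x := by
    rw [← le_div_iff₀ hs, ← h]; exact Int.floor_le (x/s)
  have h2 : x < ((⌊y/s⌋:ℝ) + 1) * s := by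
    rw [← div_lt_iff₀ hs, ← h]; exact_mod_cast Int.lt_floor_add_one (x/s)
  have h3 : (⌊y/s⌋:ℝ) * s ≤ y := by
    rw [← le_div_iff₀ hs]; exact Int.floor_le (y/s)
  have h4 : y < ((⌊y/s⌋:ℝ) + 1) * s := by
    rw [← div_lt_iff₀ hs]; exact_mod_cast Int.lt_floor_add_one (y/s)
  rw [abs_sub_lt_iff]
  constructor <;> nlinarith

lemma grid_far {s x y : ℝ} (hs : 0 < s) {Q : ℕ} (hne : ⌊x/s⌋ ≠ ⌊y/s⌋)
    (hdvd : (Q:ℤ) ∣ (⌊x/s⌋ - ⌊y/s⌋)) : ((Q:ℝ) - 1) * s ≤ |x - y| := by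
  have habs : (Q:ℤ) ≤ |⌊x/s⌋ - ⌊y/s⌋| :=
    Int.le_of_dvd (abs_pos.mpr (sub_ne_zero.mpr hne)) ((dvd_abs _ _).mpr hdvd)
  have main : ∀ u v : ℝ, (Q:ℤ) ≤ ⌊u/s⌋ - ⌊v/s⌋ → ((Q:ℝ) - 1) * s ≤ u - v := by
    intro u v hpq
    have hu : ((⌊u/s⌋:ℝ)) * s ≤ u := by
      rw [← le_div_iff₀ hs]; exact Int.floor_le (u/s)
    have hv : v < ((⌊v/s⌋:ℝ) + 1) * s := by
      rw [← div_lt_iff₀ hs]; exact_mod_cast Int.lt_floor_add_one (v/s)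
    have hc : ((Q:ℝ) - 1) ≤ (⌊u/s⌋:ℝ) - (⌊v/s⌋:ℝ) - 1 := by
      have : ((Q:ℝ)) ≤ (⌊u/s⌋:ℝ) - (⌊v/s⌋:ℝ) := by exact_mod_cast hpq
      linarith
    nlinarith [mul_le_mul_of_nonneg_right hc hs.le]
  rcases abs_cases (⌊x/s⌋ - ⌊y/s⌋) with ⟨he, _⟩ | ⟨he, _⟩
  · rw [he] at habs
    exact le_trans (main x y habs) (le_abs_self _)
  · rw [he] at habs
    rw [abs_sub_comm]
    exact le_trans (main y x (by omega)) (le_abs_self _)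

/-- The dyadic annulus index of a point of the disc:  the unique `I ≥ 1` with
`2^(-I) < 1 - |w| ≤ 2^(1-I)`. -/
noncomputable def annIdx (w : ℂ) : ℤ := Int.log 2 (2 / (1 - ‖w‖))

lemma ann_mem {w : ℂ} (hw : ‖w‖ < 1) :
    1 ≤ annIdx w ∧ (2:ℝ)^(-(annIdx w)) < 1 - ‖w‖ ∧
      1 - ‖w‖ ≤ (2:ℝ)^(1 - annIdx w) := by
  set d : ℝ := 1 - ‖w‖ with hd
  have hd0 : 0 < d := sub_pos.mpr hw
  have hd1 : d ≤ 1 := by have := norm_nonneg w; rw [hd]; linarith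
  have h2d : (0:ℝ) < 2/d := by positivity
  have hlog : ((2:ℕ):ℝ) ^ Int.log 2 (2/d) ≤ 2/d :=
    Int.zpow_log_le_self (by norm_num) h2d
  have hlog2 : 2/d < ((2:ℕ):ℝ) ^ (Int.log 2 (2/d) + 1) :=
    Int.lt_zpow_succ_log_self (by norm_num) (2/d)
  have hI : annIdx w = Int.log 2 (2/d) := rfl
  rw [hI]
  set L := Int.log 2 (2/d) with hL
  norm_num at hlog hlog2
  have hBpos : (0:ℝ) < (2:ℝ)^(L+1) := by positivity
  have hCpos : (0:ℝ) < (2:ℝ)^L := by positivity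
  have hApos : (0:ℝ) < (2:ℝ)^(-L) := by positivity
  have hDpos : (0:ℝ) < (2:ℝ)^(1-L) := by positivity
  refine ⟨?_, ?_, ?_⟩
  · rw [← Int.zpow_le_iff_le_log (by norm_num) h2d]
    have : ((2:ℕ):ℝ) ^ (1:ℤ) = 2 := by norm_num
    rw [this, le_div_iff₀ hd0]
    linarith
  · rw [div_lt_iff₀ hd0] at hlog2
    have hAB : (2:ℝ)^(-L) * 2^(L+1) = 2 := by
      rw [← zpow_add₀ (two_ne_zero' ℝ)]
      norm_num
    nlinarith
  · rw [le_div_iff₀ hd0] at hlog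
    have hAB : (2:ℝ)^(1-L) * 2^L = 2 := by
      rw [← zpow_add₀ (two_ne_zero' ℝ)]
      norm_num
    nlinarith

/-- Grid cell size at annulus `I`. -/
noncomputable def gridq (δ : ℝ) (w : ℂ) : ℝ := δ * (2:ℝ)^(-(annIdx w)) / 2

/-- The colour of a point: annulus index mod 7, and grid cell coordinates mod `Q`. -/
noncomputable def enc (Q : ℕ) (δ : ℝ) (w : ℂ) : ℕ :=
  (annIdx w).toNat % 7 +
    7 * ((⌊w.re / gridq δ w⌋ % (Q:ℤ)).toNat + Q * (⌊w.im / gridq δ w⌋ % (Q:ℤ)).toNat)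

lemma enc_lt {Q : ℕ} (hQ : 0 < Q) (δ : ℝ) (w : ℂ) : enc Q δ w < 7*Q*Q := by
  have hQZ : (0:ℤ) < (Q:ℤ) := by exact_mod_cast hQ
  have h1 : (⌊w.re / gridq δ w⌋ % (Q:ℤ)).toNat < Q := by
    have := Int.emod_lt_of_pos ⌊w.re / gridq δ w⌋ hQZ
    have := Int.emod_nonneg ⌊w.re / gridq δ w⌋ (ne_of_gt hQZ)
    omega
  have h2 : (⌊w.im / gridq δ w⌋ % (Q:ℤ)).toNat < Q := by
    have := Int.emod_lt_of_pos ⌊w.im / gridq δ w⌋ hQZ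
    have := Int.emod_nonneg ⌊w.im / gridq δ w⌋ (ne_of_gt hQZ)
    omega
  have hm : (annIdx w).toNat % 7 < 7 := Nat.mod_lt _ (by norm_num)
  unfold enc
  have hX : (⌊w.re / gridq δ w⌋ % (Q:ℤ)).toNat
      + Q * (⌊w.im / gridq δ w⌋ % (Q:ℤ)).toNat + 1 ≤ Q * Q := by
    calc (⌊w.re / gridq δ w⌋ % (Q:ℤ)).toNat
        + Q * (⌊w.im / gridq δ w⌋ % (Q:ℤ)).toNat + 1
        ≤ Q + Q * (⌊w.im / gridq δ w⌋ % (Q:ℤ)).toNat := by omega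
      _ = Q * ((⌊w.im / gridq δ w⌋ % (Q:ℤ)).toNat + 1) := by ring
      _ ≤ Q * Q := Nat.mul_le_mul_left _ (by omega)
  rw [show 7*Q*Q = 7*(Q*Q) by ring]
  set X := (⌊w.re / gridq δ w⌋ % (Q:ℤ)).toNat
      + Q * (⌊w.im / gridq δ w⌋ % (Q:ℤ)).toNat with hXdef
  set R := Q * Q with hRdef
  omega

lemma enc_mod7 (Q : ℕ) (δ : ℝ) (w : ℂ) : enc Q δ w % 7 = (annIdx w).toNat % 7 := by
  unfold enc
  omega

/-- The main geometric fact: two distinct (pseudo-hyperbolically separated) points of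
the same colour cannot lie in the top part of a common Carleson square. -/
lemma conflict {δ a ℓ : ℝ} {Q : ℕ} (hδ0 : 0 < δ) (hQ0 : 0 < Q)
    (hQ : 28 < ((Q:ℝ) - 1) * δ / 2) (hℓ0 : 0 < ℓ) (hℓ1 : ℓ ≤ 1) {w w' : ℂ}
    (hw : ‖w‖ < 1) (hw' : ‖w'‖ < 1) (hpd : δ < pd w w')
    (henc : enc Q δ w = enc Q δ w') (hmem : w ∈ topPart a ℓ) (hmem' : w' ∈ topPart a ℓ) :
    False := by
  obtain ⟨r, θ, hr1, hr2, hθ1, hθ2, hzr⟩ := hmem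
  obtain ⟨r', θ', hr1', hr2', hθ1', hθ2', hzr'⟩ := hmem'
  obtain ⟨hI1, hIl, hIh⟩ := ann_mem hw
  obtain ⟨hI1', hIl', hIh'⟩ := ann_mem hw'
  have hr0 : 0 ≤ r := by linarith
  have hr0' : 0 ≤ r' := by linarith
  have habs : ‖w‖ = r := by
    rw [hzr, norm_mul, Complex.norm_real, Real.norm_eq_abs, Complex.norm_exp_ofReal_mul_I, mul_one,
      abs_of_nonneg hr0]
  have habs' : ‖w'‖ = r' := by
    rw [hzr', norm_mul, Complex.norm_real, Real.norm_eq_abs, Complex.norm_exp_ofReal_mul_I, mul_one,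
      abs_of_nonneg hr0']
  have hwin1 : ℓ/2 < 1 - ‖w‖ := by rw [habs]; linarith
  have hwin2 : 1 - ‖w‖ ≤ ℓ := by rw [habs]; linarith
  have hwin1' : ℓ/2 < 1 - ‖w'‖ := by rw [habs']; linarith
  have hwin2' : 1 - ‖w'‖ ≤ ℓ := by rw [habs']; linarith
  -- the two annulus indices agree
  have hIeq : annIdx w = annIdx w' := by
    have hle1 : annIdx w ≤ annIdx w' + 1 := by
      have e : (2:ℝ)^(2 - annIdx w) = 2 * 2^(1 - annIdx w) := by
        rw [show (2:ℤ) - annIdx w = 1 + (1 - annIdx w) by ring,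
          zpow_add₀ (two_ne_zero' ℝ), zpow_one]
      have hchain : (2:ℝ)^(-(annIdx w')) < 2^(2 - annIdx w) := by
        rw [e]; linarith
      have := (zpow_lt_zpow_iff_right₀ one_lt_two).mp hchain
      omega
    have hle2 : annIdx w' ≤ annIdx w + 1 := by
      have e : (2:ℝ)^(2 - annIdx w') = 2 * 2^(1 - annIdx w') := by
        rw [show (2:ℤ) - annIdx w' = 1 + (1 - annIdx w') by ring,
          zpow_add₀ (two_ne_zero' ℝ), zpow_one]
      have hchain : (2:ℝ)^(-(annIdx w)) < 2^(2 - annIdx w') := by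
        rw [e]; linarith
      have := (zpow_lt_zpow_iff_right₀ one_lt_two).mp hchain
      omega
    have hm : (annIdx w).toNat % 7 = (annIdx w').toNat % 7 := by
      have h := henc
      unfold enc at h
      set X := (⌊w.re / gridq δ w⌋ % (Q:ℤ)).toNat
          + Q * (⌊w.im / gridq δ w⌋ % (Q:ℤ)).toNat with hX
      set X' := (⌊w'.re / gridq δ w'⌋ % (Q:ℤ)).toNat
          + Q * (⌊w'.im / gridq δ w'⌋ % (Q:ℤ)).toNat with hX'
      omega
    omega
  -- common grid size
  have hgq : gridq δ w' = gridq δ w := by unfold gridq; rw [hIeq]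
  have hA0 : (0:ℝ) < (2:ℝ)^(-(annIdx w)) := by positivity
  have hs0 : 0 < gridq δ w := by
    have e : gridq δ w = δ * (2:ℝ)^(-(annIdx w)) / 2 := rfl
    rw [e]; positivity
  set A : ℝ := (2:ℝ)^(-(annIdx w)) with hA
  have hsA : 2 * gridq δ w = δ * A := by
    have e : gridq δ w = δ * A / 2 := rfl
    rw [e]; ring
  -- decode the colour equality into grid-cell congruences
  have hQZ : (0:ℤ) < (Q:ℤ) := by exact_mod_cast hQ0
  have hcells : ⌊w.re / gridq δ w⌋ % (Q:ℤ) = ⌊w'.re / gridq δ w⌋ % (Q:ℤ) ∧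
      ⌊w.im / gridq δ w⌋ % (Q:ℤ) = ⌊w'.im / gridq δ w⌋ % (Q:ℤ) := by
    have h := henc
    unfold enc at h
    rw [hgq] at h
    have hb1 := Int.emod_lt_of_pos ⌊w.re / gridq δ w⌋ hQZ
    have hb2 := Int.emod_nonneg ⌊w.re / gridq δ w⌋ (ne_of_gt hQZ)
    have hb3 := Int.emod_lt_of_pos ⌊w.im / gridq δ w⌋ hQZ
    have hb4 := Int.emod_nonneg ⌊w.im / gridq δ w⌋ (ne_of_gt hQZ)
    have hb1' := Int.emod_lt_of_pos ⌊w'.re / gridq δ w⌋ hQZ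
    have hb2' := Int.emod_nonneg ⌊w'.re / gridq δ w⌋ (ne_of_gt hQZ)
    have hb3' := Int.emod_lt_of_pos ⌊w'.im / gridq δ w⌋ hQZ
    have hb4' := Int.emod_nonneg ⌊w'.im / gridq δ w⌋ (ne_of_gt hQZ)
    have hXeq : (⌊w.re / gridq δ w⌋ % (Q:ℤ)).toNat
          + Q * (⌊w.im / gridq δ w⌋ % (Q:ℤ)).toNat
        = (⌊w'.re / gridq δ w⌋ % (Q:ℤ)).toNat
          + Q * (⌊w'.im / gridq δ w⌋ % (Q:ℤ)).toNat := by
      set u := Q * (⌊w.im / gridq δ w⌋ % (Q:ℤ)).toNat with hu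
      set v := Q * (⌊w'.im / gridq δ w⌋ % (Q:ℤ)).toNat with hv
      omega
    have hre : (⌊w.re / gridq δ w⌋ % (Q:ℤ)).toNat
        = (⌊w'.re / gridq δ w⌋ % (Q:ℤ)).toNat := by
      have e1 : ((⌊w.re / gridq δ w⌋ % (Q:ℤ)).toNat
          + Q * (⌊w.im / gridq δ w⌋ % (Q:ℤ)).toNat) % Q
          = (⌊w.re / gridq δ w⌋ % (Q:ℤ)).toNat := by
        rw [Nat.add_mul_mod_self_left]
        exact Nat.mod_eq_of_lt (by omega)
      have e2 : ((⌊w'.re / gridq δ w⌋ % (Q:ℤ)).toNat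
          + Q * (⌊w'.im / gridq δ w⌋ % (Q:ℤ)).toNat) % Q
          = (⌊w'.re / gridq δ w⌋ % (Q:ℤ)).toNat := by
        rw [Nat.add_mul_mod_self_left]
        exact Nat.mod_eq_of_lt (by omega)
      rw [← e1, ← e2, hXeq]
    have him : (⌊w.im / gridq δ w⌋ % (Q:ℤ)).toNat
        = (⌊w'.im / gridq δ w⌋ % (Q:ℤ)).toNat := by
      have h' := hXeq
      rw [hre] at h'
      exact Nat.eq_of_mul_eq_mul_left hQ0 (by omega :
        Q * (⌊w.im / gridq δ w⌋ % (Q:ℤ)).toNat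
          = Q * (⌊w'.im / gridq δ w⌋ % (Q:ℤ)).toNat)
    constructor <;> omega
  -- upper bound on the distance
  have hrle1 : r ≤ 1 := by linarith
  have hup : ‖w - w'‖ ≤ ℓ/2 + 2*Real.pi*ℓ := by
    have hsplit : w - w' = ((r:ℂ) - (r':ℂ)) * Complex.exp ((θ':ℝ) * Complex.I)
        + (r:ℂ) * (Complex.exp ((θ:ℝ) * Complex.I) - Complex.exp ((θ':ℝ) * Complex.I)) := by
      rw [hzr, hzr']; ring
    have e1 : ‖((r:ℂ) - (r':ℂ)) * Complex.exp ((θ':ℝ) * Complex.I)‖ = |r - r'| := by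
      rw [norm_mul, Complex.norm_exp_ofReal_mul_I, mul_one, ← Complex.ofReal_sub,
        Complex.norm_real, Real.norm_eq_abs]
    have e2 : ‖(r:ℂ) * (Complex.exp ((θ:ℝ) * Complex.I)
        - Complex.exp ((θ':ℝ) * Complex.I))‖ ≤ |θ - θ'| := by
      rw [norm_mul, Complex.norm_real, Real.norm_eq_abs, abs_of_nonneg hr0]
      have h3 := exp_I_dist θ θ'
      have h4 := norm_nonneg (Complex.exp ((θ:ℝ) * Complex.I)
        - Complex.exp ((θ':ℝ) * Complex.I))
      have h5 := mul_le_mul_of_nonneg_right hrle1 h4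
      linarith
    have habsd : |r - r'| ≤ ℓ/2 := abs_le.mpr ⟨by linarith, by linarith⟩
    have hθd : |θ - θ'| ≤ 2*Real.pi*ℓ := abs_le.mpr ⟨by linarith, by linarith⟩
    calc ‖w - w'‖
        ≤ ‖((r:ℂ) - (r':ℂ)) * Complex.exp ((θ':ℝ) * Complex.I)‖
          + ‖(r:ℂ) * (Complex.exp ((θ:ℝ) * Complex.I)
            - Complex.exp ((θ':ℝ) * Complex.I))‖ := by
          rw [hsplit]; exact norm_add_le _ _
      _ ≤ ℓ/2 + 2*Real.pi*ℓ := by rw [e1]; linarith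
  have hl4 : ℓ < 4 * A := by
    have e : (2:ℝ)^(1 - annIdx w) = 2 * A := by
      rw [hA, show (1:ℤ) - annIdx w = 1 + -(annIdx w) by ring,
        zpow_add₀ (two_ne_zero' ℝ), zpow_one]
    have h5 : 1 - ‖w'‖ ≤ (2:ℝ)^(1 - annIdx w) := by rw [hIeq]; exact hIh'
    rw [e] at h5
    linarith
  have hupA : ‖w - w'‖ ≤ 28 * A := by
    have hπ : Real.pi ≤ 3.15 := Real.pi_lt_d2.le
    have hπ0 := Real.pi_pos
    have hc7 : ℓ/2 + 2*Real.pi*ℓ ≤ 7*ℓ := bound7 hℓ0.le hπ hπ0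
    linarith
  -- lower bound on the distance
  have hlowA : δ * A < ‖w - w'‖ := by
    have hpd' := hpd
    simp only [pd] at hpd'
    have hDle : 1 - ‖w'‖ ≤ ‖1 - (starRingEnd ℂ) w * w'‖ := by
      have h1 : ‖(starRingEnd ℂ) w * w'‖ ≤ ‖w'‖ := by
        rw [norm_mul, Complex.norm_conj]
        exact mul_le_of_le_one_left (norm_nonneg _) hw.le
      have h2 := norm_sub_norm_le (1 : ℂ) ((starRingEnd ℂ) w * w')
      simp only [norm_one] at h2
      linarith
    have hd0' : 0 < 1 - ‖w'‖ := sub_pos.mpr hw'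
    have hD0 : 0 < ‖1 - (starRingEnd ℂ) w * w'‖ := lt_of_lt_of_le hd0' hDle
    rw [lt_div_iff₀ hD0] at hpd'
    have hA' : A < 1 - ‖w'‖ := by
      rw [hA, hIeq]; exact hIl'
    have p1 := mul_lt_mul_of_pos_left hA' hδ0
    have p2 := mul_le_mul_of_nonneg_left hDle hδ0.le
    linarith
  -- grid contradiction
  have hreim : (w - w').re = w.re - w'.re ∧ (w - w').im = w.im - w'.im := by
    simp [Complex.sub_re, Complex.sub_im]
  by_cases hpe : ⌊w.re / gridq δ w⌋ = ⌊w'.re / gridq δ w⌋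
  · by_cases hqe : ⌊w.im / gridq δ w⌋ = ⌊w'.im / gridq δ w⌋
    · have g1 := grid_close hs0 hpe
      have g2 := grid_close hs0 hqe
      have hle := Complex.norm_le_abs_re_add_abs_im (w - w')
      rw [hreim.1, hreim.2] at hle
      linarith
    · have hdvd : (Q:ℤ) ∣ ⌊w.im / gridq δ w⌋ - ⌊w'.im / gridq δ w⌋ := by
        have hmod : ⌊w.im / gridq δ w⌋ ≡ ⌊w'.im / gridq δ w⌋ [ZMOD (Q:ℤ)] := hcells.2
        exact (Int.ModEq.dvd hmod.symm)
      have g := grid_far hs0 hqe hdvd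
      have hle := Complex.abs_im_le_norm (w - w')
      rw [hreim.2] at hle
      have hcontra : ((Q:ℝ) - 1) * gridq δ w > 28 * A := by
        have e : ((Q:ℝ) - 1) * gridq δ w = ((Q:ℝ) - 1) * δ / 2 * A := by
          rw [show gridq δ w = δ * A / 2 from rfl]; ring
        rw [e]
        have p1 := mul_lt_mul_of_pos_right hQ hA0
        linarith
      linarith
  · have hdvd : (Q:ℤ) ∣ ⌊w.re / gridq δ w⌋ - ⌊w'.re / gridq δ w⌋ := by
      have hmod : ⌊w.re / gridq δ w⌋ ≡ ⌊w'.re / gridq δ w⌋ [ZMOD (Q:ℤ)] := hcells.1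
      exact (Int.ModEq.dvd hmod.symm)
    have g := grid_far hs0 hpe hdvd
    have hle := Complex.abs_re_le_norm (w - w')
    rw [hreim.1] at hle
    have hcontra : ((Q:ℝ) - 1) * gridq δ w > 28 * A := by
      have e : ((Q:ℝ) - 1) * gridq δ w = ((Q:ℝ) - 1) * δ / 2 * A := by
        rw [show gridq δ w = δ * A / 2 from rfl]; ring
      rw [e]
      have p1 := mul_lt_mul_of_pos_right hQ hA0
      linarith
    linarith

theorem separated_seq_splits (z : ℕ → ℂ) (hz : ∀ n, ‖z n‖ < 1)
    (hsep : Separated z) :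
    ∃ (M : ℕ) (F : ℕ → Fin M), ∀ j : Fin M,
      (∀ a ℓ : ℝ, 0 < ℓ → ℓ ≤ 1 → ∀ n n' : ℕ, F n = j → F n' = j →
        z n ∈ topPart a ℓ → z n' ∈ topPart a ℓ → z n = z n') ∧
      ∃ m : ℕ, m ≤ 6 ∧ ∀ n : ℕ, F n = j → ∃ k : ℕ,
        (2 : ℝ) ^ (-((m : ℤ) + 7 * k)) < 1 - ‖z n‖ ∧
        1 - ‖z n‖ ≤ (2 : ℝ) ^ (-((m : ℤ) + 7 * k - 1)) := by
  obtain ⟨δ, hδ0, hδ1, hδsep⟩ := hsep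
  set Q : ℕ := ⌈56 / δ⌉₊ + 2 with hQdef
  have hQ0 : 0 < Q := by omega
  have hQr : 56 / δ + 2 ≤ (Q:ℝ) := by
    have := Nat.le_ceil (56/δ)
    rw [hQdef]; push_cast; linarith
  have hQδ : 28 < ((Q:ℝ) - 1) * δ / 2 := by
    have h56 : 56/δ * δ = 56 := div_mul_cancel₀ _ (ne_of_gt hδ0)
    nlinarith
  refine ⟨7*Q*Q, fun n => ⟨enc Q δ (z n), enc_lt hQ0 δ (z n)⟩, ?_⟩
  intro j
  constructor
  · intro a ℓ hℓ0 hℓ1 n n' hFn hFn' hmem hmem'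
    rcases eq_or_ne n n' with rfl | hne
    · rfl
    · exfalso
      have henc : enc Q δ (z n) = enc Q δ (z n') := by
        have := hFn.trans hFn'.symm
        simpa using congrArg Fin.val this
      exact conflict hδ0 hQ0 hQδ hℓ0 hℓ1 (hz n) (hz n') (hδsep n n' hne) henc hmem hmem'
  · refine ⟨(j:ℕ) % 7, by omega, fun n hFn => ?_⟩
    have hv : enc Q δ (z n) = (j:ℕ) := congrArg Fin.val hFn
    have hmod : (j:ℕ) % 7 = (annIdx (z n)).toNat % 7 := by
      rw [← hv, enc_mod7]
    obtain ⟨hI1, hIl, hIh⟩ := ann_mem (hz n)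
    refine ⟨(annIdx (z n)).toNat / 7, ?_, ?_⟩
    · have hexp : (((j:ℕ) % 7 : ℕ) : ℤ) + 7 * (((annIdx (z n)).toNat / 7 : ℕ) : ℤ)
          = annIdx (z n) := by
        have := Nat.mod_add_div (annIdx (z n)).toNat 7
        omega
      rw [show -((((j:ℕ) % 7 : ℕ) : ℤ) + 7 * (((annIdx (z n)).toNat / 7 : ℕ) : ℤ))
          = -(annIdx (z n)) by omega]
      exact hIl
    · have hexp : (((j:ℕ) % 7 : ℕ) : ℤ) + 7 * (((annIdx (z n)).toNat / 7 : ℕ) : ℤ)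
          = annIdx (z n) := by
        have := Nat.mod_add_div (annIdx (z n)).toNat 7
        omega
      rw [show -((((j:ℕ) % 7 : ℕ) : ℤ) + 7 * (((annIdx (z n)).toNat / 7 : ℕ) : ℤ) - 1)
          = 1 - annIdx (z n) by omega]
      exact hIh
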